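/- Let C ∈ ℝ₊^{n×n}, η > 0, r, c ∈ Δ_n. If P = D(u) e^{−ηC} D(v) for positive vectors u, v and P ∈ U_{r,c}, then P is the unique minimizer of ⟨Q,C⟩ − η⁻¹H(Q) over Q ∈ U_{r,c}. -/

import Mathlib

lemma kl_term_le (x y : ℝ) (hx : 0 ≤ x) (hy : 0 < y) :
    x - y ≤ x * Real.log x - x * Real.log y := by
  rcases eq_or_lt_of_le hx with h | h
  · simp [← h]; linarith
  · have h1 : Real.log (y / x) ≤ y / x - 1 := Real.log_le_sub_one_of_pos (div_pos hy h)
    rw [Real.log_div hy.ne' h.ne'] at h1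
    have h2 : x * (Real.log y - Real.log x) ≤ x * (y / x - 1) :=
      mul_le_mul_of_nonneg_left h1 h.le
    have h3 : x * (y / x) = y := by field_simp
    nlinarith

lemma kl_term_lt (x y : ℝ) (hx : 0 ≤ x) (hy : 0 < y) (hne : x ≠ y) :
    x - y < x * Real.log x - x * Real.log y := by
  rcases eq_or_lt_of_le hx with h | h
  · simp [← h]; linarith
  · have hdiv : y / x ≠ 1 := by
      intro hcon
      exact hne ((div_eq_one_iff_eq h.ne').mp hcon).symm
    have h1 : Real.log (y / x) < y / x - 1 :=
      Real.log_lt_sub_one_of_pos (div_pos hy h) hdiv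
    rw [Real.log_div hy.ne' h.ne'] at h1
    have h2 : x * (Real.log y - Real.log x) < x * (y / x - 1) :=
      (mul_lt_mul_iff_right₀ h).mpr h1
    have h3 : x * (y / x) = y := by field_simp
    nlinarith

/-- Lemma 1 (Cuturi): if `P = D(u) e^{−ηC} D(v)` with positive `u, v` lies in
`U_{r,c}`, then `P` is the unique minimizer of `⟨Q,C⟩ − η⁻¹H(Q)` over `U_{r,c}`. -/
theorem diag_scaling_is_unique_minimizer (n : ℕ) (C : Fin n → Fin n → ℝ)
    (η : ℝ) (r c u v : Fin n → ℝ) (P : Fin n → Fin n → ℝ)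
    (hC : ∀ i j, 0 ≤ C i j) (hη : 0 < η)
    (hr0 : ∀ i, 0 ≤ r i) (hr1 : ∑ i, r i = 1)
    (hc0 : ∀ j, 0 ≤ c j) (hc1 : ∑ j, c j = 1)
    (hu : ∀ i, 0 < u i) (hv : ∀ j, 0 < v j)
    (hP : ∀ i j, P i j = u i * Real.exp (-η * C i j) * v j)
    (hProw : ∀ i, ∑ j, P i j = r i) (hPcol : ∀ j, ∑ i, P i j = c j) :
    ∀ Q : Fin n → Fin n → ℝ,
      (∀ i j, 0 ≤ Q i j) → (∀ i, ∑ j, Q i j = r i) → (∀ j, ∑ i, Q i j = c j) →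
      Q ≠ P →
      (∑ i, ∑ j, P i j * C i j) + η⁻¹ * ∑ i, ∑ j, P i j * Real.log (P i j)
        < (∑ i, ∑ j, Q i j * C i j) + η⁻¹ * ∑ i, ∑ j, Q i j * Real.log (Q i j) := by
  intro Q hQ0 hQr hQc hQne
  have hPpos : ∀ i j, 0 < P i j := by
    intro i j
    rw [hP]
    exact mul_pos (mul_pos (hu i) (Real.exp_pos _)) (hv j)
  have hlogP : ∀ i j, Real.log (P i j)
      = Real.log (u i) + Real.log (v j) - η * C i j := by
    intro i j
    rw [hP, Real.log_mul (mul_pos (hu i) (Real.exp_pos _)).ne' (hv j).ne',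
      Real.log_mul (hu i).ne' (Real.exp_ne_zero _), Real.log_exp]
    ring
  have hC' : ∀ i j, C i j
      = η⁻¹ * (Real.log (u i) + Real.log (v j) - Real.log (P i j)) := by
    intro i j
    rw [hlogP]
    field_simp
    ring
  -- the key identity, for any matrix with marginals r, c
  have key : ∀ R : Fin n → Fin n → ℝ, (∀ i, ∑ j, R i j = r i) →
      (∀ j, ∑ i, R i j = c j) →
      (∑ i, ∑ j, R i j * C i j) + η⁻¹ * ∑ i, ∑ j, R i j * Real.log (R i j)
      = η⁻¹ * ((∑ i, r i * Real.log (u i)) + (∑ j, c j * Real.log (v j))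
          + ∑ i, ∑ j, (R i j * Real.log (R i j) - R i j * Real.log (P i j))) := by
    intro R hrr hcc
    have h1 : ∑ i, ∑ j, R i j * C i j
        = η⁻¹ * ((∑ i, r i * Real.log (u i)) + (∑ j, c j * Real.log (v j))
            - ∑ i, ∑ j, R i j * Real.log (P i j)) := by
      have e1 : ∀ i j, R i j * C i j
          = η⁻¹ * (R i j * Real.log (u i) + R i j * Real.log (v j)
              - R i j * Real.log (P i j)) := by
        intro i j; rw [hC' i j]; ring
      simp_rw [e1, ← Finset.mul_sum]
      congr 1
      have eA : ∑ i, ∑ j, R i j * Real.log (u i) = ∑ i, r i * Real.log (u i) := by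
        refine Finset.sum_congr rfl fun i _ => ?_
        rw [← Finset.sum_mul, hrr i]
      have eB : ∑ i, ∑ j, R i j * Real.log (v j) = ∑ j, c j * Real.log (v j) := by
        rw [Finset.sum_comm]
        refine Finset.sum_congr rfl fun j _ => ?_
        rw [← Finset.sum_mul, hcc j]
      simp_rw [Finset.sum_sub_distrib, Finset.sum_add_distrib]
      rw [eA, eB]
    rw [h1]
    simp_rw [Finset.sum_sub_distrib]
    ring
  rw [key P hProw hPcol, key Q hQr hQc]
  have hA : ∀ x : ℝ, 0 < x →
      (∑ i, r i * Real.log (u i)) + (∑ j, c j * Real.log (v j)) + 0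
        < (∑ i, r i * Real.log (u i)) + (∑ j, c j * Real.log (v j)) + x := by
    intro x hx; linarith
  have hTP : ∑ i, ∑ j, (P i j * Real.log (P i j) - P i j * Real.log (P i j)) = 0 := by
    simp
  rw [hTP]
  apply (mul_lt_mul_iff_right₀ (inv_pos.mpr hη)).mpr
  apply hA
  -- 0 < KL(Q ‖ P)
  have hsum : ∑ i, ∑ j, (Q i j - P i j) = 0 := by
    simp_rw [Finset.sum_sub_distrib]
    simp_rw [hQr, hProw]
    simp
  rw [← hsum]
  obtain ⟨i₀, j₀, hij⟩ : ∃ i j, Q i j ≠ P i j := by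
    by_contra hcon
    push_neg at hcon
    exact hQne (funext fun i => funext fun j => hcon i j)
  simp_rw [← Fintype.sum_prod_type']
  apply Finset.sum_lt_sum
  · intro p _
    exact kl_term_le _ _ (hQ0 p.1 p.2) (hPpos p.1 p.2)
  · exact ⟨(i₀, j₀), Finset.mem_univ _,
      kl_term_lt _ _ (hQ0 i₀ j₀) (hPpos i₀ j₀) hij⟩
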